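/- If the n-vertex path P is a subgraph of H ⊠ K_m for some graph H with tree-depth at most d and m ≥ 1, then n ≤ (2m)^d. -/

import Mathlib

open SimpleGraph

/-- The strong product of two simple graphs. -/
def StrongProd {V W : Type*} (G : SimpleGraph V) (H : SimpleGraph W) : SimpleGraph (V × W) where
  Adj a b := a ≠ b ∧ (a.1 = b.1 ∨ G.Adj a.1 b.1) ∧ (a.2 = b.2 ∨ H.Adj a.2 b.2)
  symm := ⟨by
    rintro a b ⟨hne, h1, h2⟩
    exact ⟨hne.symm, h1.imp Eq.symm (fun h => h.symm), h2.imp Eq.symm (fun h => h.symm)⟩⟩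
  loopless := ⟨by rintro a ⟨hne, _⟩; exact hne rfl⟩

/-- `G` is isomorphic to a subgraph of `H`. -/
def ContainedIn {V W : Type*} (G : SimpleGraph V) (H : SimpleGraph W) : Prop :=
  ∃ f : V → W, Function.Injective f ∧ ∀ ⦃u v⦄, G.Adj u v → H.Adj (f u) (f v)

/-- Every connected component of `G - S` has at most `q` vertices. -/
def CompsLE {V : Type*} (G : SimpleGraph V) (S : Set V) (q : ℕ) : Prop :=
  ∀ c : (G.induce Sᶜ).ConnectedComponent, Nat.card c.supp ≤ q

/-- Every connected component of `G - S` has at most `q` vertices (real bound). -/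
def CompsLER {V : Type*} (G : SimpleGraph V) (S : Set V) (q : ℝ) : Prop :=
  ∀ c : (G.induce Sᶜ).ConnectedComponent, (Nat.card c.supp : ℝ) ≤ q

/-- `(TG, B)` is a tree-decomposition of `G`: `TG` is a tree, every vertex and
every edge of `G` lies in some bag, and for each vertex the set of nodes whose
bag contains it induces a nonempty connected subgraph of `TG`. -/
def IsTreeDecomp {V T : Type*} (G : SimpleGraph V) (TG : SimpleGraph T) (B : T → Set V) : Prop :=
  TG.IsTree ∧
  (∀ v, ∃ t, v ∈ B t) ∧
  (∀ ⦃u v⦄, G.Adj u v → ∃ t, u ∈ B t ∧ v ∈ B t) ∧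
  (∀ v, (TG.induce {t | v ∈ B t}).Connected)

/-- The tree-width of `G` is at most `k`. -/
def twLE {V : Type*} (G : SimpleGraph V) (k : ℕ) : Prop :=
  ∃ (T : Type) (TG : SimpleGraph T) (B : T → Set V),
    IsTreeDecomp G TG B ∧ ∀ t, Nat.card (B t) ≤ k + 1

/-- A path-decomposition of `G` with `t` bags. -/
def IsPathDecomp {V : Type*} (G : SimpleGraph V) (t : ℕ) (B : Fin t → Set V) : Prop :=
  (∀ v, ∃ i, v ∈ B i) ∧
  (∀ ⦃u v⦄, G.Adj u v → ∃ i, u ∈ B i ∧ v ∈ B i) ∧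
  (∀ i j l : Fin t, i ≤ j → j ≤ l → B i ∩ B l ⊆ B j)

/-- The path-width of `G` is at most `k`. -/
def pwLE {V : Type*} (G : SimpleGraph V) (k : ℕ) : Prop :=
  ∃ (t : ℕ) (B : Fin t → Set V), IsPathDecomp G t B ∧ ∀ i, Nat.card (B i) ≤ k + 1

/-- The tree-depth of `G` is at most `d`: there is a strict forest order (the
strict ancestor relation of a rooted forest) whose comparability graph contains
`G`, with all chains of at most `d` vertices. -/
def tdLE {V : Type*} (G : SimpleGraph V) (d : ℕ) : Prop :=
  ∃ lt : V → V → Prop,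
    Transitive lt ∧
    (∀ u v w, lt u w → lt v w → lt u v ∨ lt v u ∨ u = v) ∧
    (∀ ⦃u v⦄, G.Adj u v → lt u v ∨ lt v u) ∧
    ∃ f : V → Fin d, ∀ u v, lt u v → f u < f v

/-- `P` is an `H`-partition of `G`: the parts partition `V(G)` and every edge of
`G` lies within a part or between parts indexed by adjacent vertices of `H`. -/
def IsHPartition {V W : Type*} (G : SimpleGraph V) (H : SimpleGraph W) (P : W → Set V) : Prop :=
  (∀ v, ∃! x, v ∈ P x) ∧
  ∀ ⦃u v⦄, G.Adj u v → ∀ ⦃x y⦄, u ∈ P x → v ∈ P y → x = y ∨ H.Adj x y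

/-- The tree-partition-width of `G` is at most `m`. -/
def tpwLE {V : Type*} (G : SimpleGraph V) (m : ℕ) : Prop :=
  ∃ (T : Type) (TG : SimpleGraph T) (P : T → Set V),
    TG.IsTree ∧ IsHPartition G TG P ∧ ∀ x, Nat.card (P x) ≤ m

/-- The star with centre `none` and leaves `some i`, `i : ι`. -/
def starGraph (ι : Type*) : SimpleGraph (Option ι) where
  Adj a b := a ≠ b ∧ (a = none ∨ b = none)
  symm := ⟨by rintro a b ⟨hne, h⟩; exact ⟨hne.symm, h.symm⟩⟩
  loopless := ⟨by rintro a ⟨hne, _⟩; exact hne rfl⟩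

/-- A graph class is hereditary if it is closed under induced subgraphs. -/
def Hereditary (𝒢 : ∀ V : Type, SimpleGraph V → Prop) : Prop :=
  ∀ (V : Type) (G : SimpleGraph V), 𝒢 V G → ∀ S : Set V, 𝒢 S (G.induce S)

/-- Every `n`-vertex graph of the class has a balanced separator of size at most
`c * n ^ (1 - ε)`. -/
def SepBound (𝒢 : ∀ V : Type, SimpleGraph V → Prop) (c ε : ℝ) : Prop :=
  ∀ (V : Type) [Fintype V] (G : SimpleGraph V), 𝒢 V G →
    ∃ S : Finset V, (S.card : ℝ) ≤ c * (Fintype.card V : ℝ) ^ (1 - ε) ∧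
      CompsLER G ↑S ((Fintype.card V : ℝ) / 2)

/-- The `k`-th power of the `n`-vertex path. -/
def pathPow (n k : ℕ) : SimpleGraph (Fin n) where
  Adj i j := i ≠ j ∧ (i.val : ℤ) - j.val ≤ k ∧ (j.val : ℤ) - i.val ≤ k
  symm := ⟨by rintro i j ⟨hne, h1, h2⟩; exact ⟨hne.symm, h2, h1⟩⟩
  loopless := ⟨by rintro i ⟨hne, _⟩; exact hne rfl⟩

section KeyLemmas

variable {W : Type} {m : ℕ} {lt : W → W → Prop}

/-- Along a walk whose consecutive vertices are comparable or equal in a forest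
order, there is a global minimum. -/
lemma walk_min_exists (htr : Transitive lt)
    (hforest : ∀ u v w, lt u w → lt v w → lt u v ∨ lt v u ∨ u = v)
    {n : ℕ} (hn : 0 < n) (φ : ℕ → W × Fin m)
    (hstep : ∀ i, i + 1 < n →
      (φ i).1 = (φ (i+1)).1 ∨ lt (φ i).1 (φ (i+1)).1 ∨ lt (φ (i+1)).1 (φ i).1) :
    ∃ j, j < n ∧ ∀ i, i < n → lt (φ j).1 (φ i).1 ∨ (φ j).1 = (φ i).1 := by
  have key : ∀ t, t < n → ∃ j, j ≤ t ∧ ∀ i, i ≤ t →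
      lt (φ j).1 (φ i).1 ∨ (φ j).1 = (φ i).1 := by
    intro t
    induction t with
    | zero =>
      intro _
      refine ⟨0, le_refl 0, fun i hi => ?_⟩
      interval_cases i
      exact Or.inr rfl
    | succ t ih =>
      intro ht
      obtain ⟨j, hj, hmin⟩ := ih (by omega)
      have hs := hstep t (by omega)
      have hja := hmin t (le_refl t)
      have key2 : (lt (φ j).1 (φ (t+1)).1 ∨ (φ j).1 = (φ (t+1)).1) ∨
          lt (φ (t+1)).1 (φ j).1 := by
        rcases hs with h | h | h
        · left; rw [← h]; exact hja
        · left; left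
          rcases hja with h' | h'
          · exact htr h' h
          · rw [h']; exact h
        · rcases hja with h' | h'
          · rcases hforest _ _ _ h h' with h2 | h2 | h2
            · right; exact h2
            · left; left; exact h2
            · left; right; exact h2.symm
          · right; rw [h']; exact h
      rcases key2 with h | h
      · refine ⟨j, by omega, fun i hi => ?_⟩
        rcases Nat.lt_or_ge i (t+1) with hi' | hi'
        · exact hmin i (by omega)
        · have hieq : i = t + 1 := by omega
          rw [hieq]; exact h
      · refine ⟨t+1, le_refl _, fun i hi => ?_⟩
        rcases Nat.lt_or_ge i (t+1) with hi' | hi'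
        · rcases hmin i (by omega) with h' | h'
          · left; exact htr h h'
          · left; rw [← h']; exact h
        · have hieq : i = t + 1 := by omega
          rw [hieq]; exact Or.inr rfl
  obtain ⟨j, hj, hmin⟩ := key (n-1) (by omega)
  exact ⟨j, by omega, fun i hi => hmin i (by omega)⟩

/-- Segment lemma: if every vertex of the walk is `r` or strictly above `r`,
and there are at most `k` occurrences of `r`, then the walk is short. -/
lemma walk_segment (htr : Transitive lt)
    (hforest : ∀ u v w, lt u w → lt v w → lt u v ∨ lt v u ∨ u = v)
    (g : W → ℕ) (hg : ∀ u v, lt u v → g u < g v) (d : ℕ)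
    (IH : ∀ (b n : ℕ) (φ : ℕ → W × Fin m),
      (∀ i j, i < n → j < n → φ i = φ j → i = j) →
      (∀ i, i + 1 < n →
        (φ i).1 = (φ (i+1)).1 ∨ lt (φ i).1 (φ (i+1)).1 ∨ lt (φ (i+1)).1 (φ i).1) →
      (∀ i, i < n → b ≤ g (φ i).1) →
      (∀ i, i < n → g (φ i).1 < b + d) →
      n + 1 ≤ (2*m)^d)
    (r : W) :
    ∀ (k n : ℕ) (φ : ℕ → W × Fin m),
      (∀ i j, i < n → j < n → φ i = φ j → i = j) →
      (∀ i, i + 1 < n →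
        (φ i).1 = (φ (i+1)).1 ∨ lt (φ i).1 (φ (i+1)).1 ∨ lt (φ (i+1)).1 (φ i).1) →
      (∀ i, i < n → lt r (φ i).1 ∨ r = (φ i).1) →
      (∀ i, i < n → g (φ i).1 < g r + 1 + d) →
      (∀ s : Finset ℕ, (∀ i ∈ s, i < n ∧ (φ i).1 = r) → s.card ≤ k) →
      n + 1 ≤ (k+1) * (2*m)^d := by
  intro k
  induction k with
  | zero =>
    intro n φ hinj hstep hmin hupp hocc
    rw [zero_add, one_mul]
    apply IH (g r + 1) n φ hinj hstep
    · intro i hi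
      rcases hmin i hi with h | h
      · exact hg _ _ h
      · exfalso
        have h1 := hocc {i} (by
          intro x hx
          simp only [Finset.mem_singleton] at hx
          subst hx
          exact ⟨hi, h.symm⟩)
        simp at h1
    · intro i hi; have := hupp i hi; omega
  | succ k ihk =>
    intro n φ hinj hstep hmin hupp hocc
    classical
    by_cases hex : ∃ i, i < n ∧ (φ i).1 = r
    · set j := Nat.find hex with hjdef
      obtain ⟨hjn, hjr⟩ : j < n ∧ (φ j).1 = r := Nat.find_spec hex
      have hpre : j + 1 ≤ (2*m)^d := by
        apply IH (g r + 1) j φ (fun i i' hi hi' => hinj i i' (by omega) (by omega))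
          (fun i hi => hstep i (by omega))
        · intro i hi
          have hne : (φ i).1 ≠ r := by
            intro h
            exact Nat.find_min hex hi ⟨by omega, h⟩
          rcases hmin i (by omega) with h | h
          · exact hg _ _ h
          · exact absurd h.symm hne
        · intro i hi; have := hupp i (by omega); omega
      have hsuf : (n - j - 1) + 1 ≤ (k+1) * (2*m)^d := by
        apply ihk (n - j - 1) (fun i => φ (j + 1 + i))
        · intro i i' hi hi' h
          have := hinj (j+1+i) (j+1+i') (by omega) (by omega) h
          omega
        · intro i hi
          exact hstep (j+1+i) (by omega)
        · intro i hi; exact hmin (j+1+i) (by omega)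
        · intro i hi; exact hupp (j+1+i) (by omega)
        · intro s hs
          have hjnot : j ∉ s.image (fun i => j + 1 + i) := by
            simp only [Finset.mem_image]
            rintro ⟨i, _, h⟩; omega
          have hcard := hocc (insert j (s.image (fun i => j + 1 + i))) (by
            intro x hx
            simp only [Finset.mem_insert, Finset.mem_image] at hx
            rcases hx with rfl | ⟨i, hi, rfl⟩
            · exact ⟨hjn, hjr⟩
            · obtain ⟨h1, h2⟩ := hs i hi
              exact ⟨by omega, h2⟩)
          rw [Finset.card_insert_of_notMem hjnot,
            Finset.card_image_of_injective _ (fun a a' h => by omega)] at hcard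
          omega
      have hsplit : n + 1 = (j + 1) + ((n - j - 1) + 1) := by omega
      have hexp : (k + 1 + 1) * (2*m)^d = (2*m)^d + (k+1) * (2*m)^d := by ring
      linarith
    · push_neg at hex
      have hle : n + 1 ≤ (2*m)^d := by
        apply IH (g r + 1) n φ hinj hstep
        · intro i hi
          rcases hmin i hi with h | h
          · exact hg _ _ h
          · exact absurd h.symm (hex i hi)
        · intro i hi; have := hupp i hi; omega
      calc n + 1 ≤ (2*m)^d := hle
        _ ≤ (k+1+1) * (2*m)^d := Nat.le_mul_of_pos_left _ (by omega)

/-- Main counting lemma, by induction on the depth `d`. -/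
lemma walk_key (htr : Transitive lt)
    (hforest : ∀ u v w, lt u w → lt v w → lt u v ∨ lt v u ∨ u = v)
    (g : W → ℕ) (hg : ∀ u v, lt u v → g u < g v) (hm : 1 ≤ m) :
    ∀ (d b n : ℕ) (φ : ℕ → W × Fin m),
      (∀ i j, i < n → j < n → φ i = φ j → i = j) →
      (∀ i, i + 1 < n →
        (φ i).1 = (φ (i+1)).1 ∨ lt (φ i).1 (φ (i+1)).1 ∨ lt (φ (i+1)).1 (φ i).1) →
      (∀ i, i < n → b ≤ g (φ i).1) →
      (∀ i, i < n → g (φ i).1 < b + d) →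
      n + 1 ≤ (2*m)^d := by
  intro d
  induction d with
  | zero =>
    intro b n φ _ _ hlow hupp
    match n with
    | 0 => simp
    | n+1 =>
      have h1 := hlow 0 (by omega)
      have h2 := hupp 0 (by omega)
      omega
  | succ d ih =>
    intro b n φ hinj hstep hlow hupp
    rcases Nat.eq_zero_or_pos n with rfl | hn
    · calc 0 + 1 = 1 := by omega
        _ ≤ (2*m)^(d+1) := Nat.one_le_pow _ _ (by omega)
    obtain ⟨j, hjn, hmin⟩ := walk_min_exists htr hforest hn φ hstep
    have hocc : ∀ s : Finset ℕ, (∀ i ∈ s, i < n ∧ (φ i).1 = (φ j).1) → s.card ≤ m := by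
      intro s hs
      have hcard : s.card ≤ (Finset.univ : Finset (Fin m)).card := by
        apply Finset.card_le_card_of_injOn (fun i => (φ i).2) (fun i _ => Finset.mem_univ _)
        intro a ha a' ha' haa
        obtain ⟨ha1, ha2⟩ := hs a ha
        obtain ⟨hb1, hb2⟩ := hs a' ha'
        exact hinj a a' ha1 hb1 (Prod.ext (ha2.trans hb2.symm) haa)
      simpa using hcard
    have hA := walk_segment htr hforest g hg d ih (φ j).1 m n φ hinj hstep
      (fun i hi => hmin i hi)
      (fun i hi => by have h1 := hupp i hi; have h2 := hlow j hjn; omega)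
      hocc
    have h2 : (m+1) * (2*m)^d ≤ (2*m)^(d+1) := by
      rw [pow_succ]
      calc (m+1) * (2*m)^d = (2*m)^d * (m+1) := by ring
        _ ≤ (2*m)^d * (2*m) := Nat.mul_le_mul_left _ (by omega)
    exact le_trans hA h2

end KeyLemmas

theorem path_in_treedepth_product (n d m : ℕ) (hn : 0 < n) (hd : 0 < d) (hm : 1 ≤ m)
    (W : Type) (H : SimpleGraph W) (htd : tdLE H d)
    (hcont : ContainedIn (SimpleGraph.pathGraph n)
      (StrongProd H (⊤ : SimpleGraph (Fin m)))) :
    n ≤ (2 * m) ^ d := by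
  obtain ⟨lt, htr, hforest, hadj, fdep, hfdep⟩ := htd
  obtain ⟨f, hfinj, hfadj⟩ := hcont
  set φ : ℕ → W × Fin m := fun i => if h : i < n then f ⟨i, h⟩ else f ⟨0, hn⟩ with hφ
  have hφeq : ∀ i (h : i < n), φ i = f ⟨i, h⟩ := fun i h => dif_pos h
  have hinj : ∀ i j, i < n → j < n → φ i = φ j → i = j := by
    intro i j hi hj hij
    rw [hφeq i hi, hφeq j hj] at hij
    have := hfinj hij
    simpa using congrArg Fin.val this
  have hstep : ∀ i, i + 1 < n →
      (φ i).1 = (φ (i+1)).1 ∨ lt (φ i).1 (φ (i+1)).1 ∨ lt (φ (i+1)).1 (φ i).1 := by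
    intro i hi
    have hadjP : (SimpleGraph.pathGraph n).Adj ⟨i, by omega⟩ ⟨i+1, hi⟩ := by
      rw [SimpleGraph.pathGraph_adj]
      left; rfl
    have hS := hfadj hadjP
    rw [hφeq i (by omega), hφeq (i+1) hi]
    obtain ⟨hne, h1, h2⟩ := hS
    rcases h1 with h | h
    · exact Or.inl h
    · rcases hadj h with h' | h'
      · exact Or.inr (Or.inl h')
      · exact Or.inr (Or.inr h')
  have key := walk_key htr hforest (fun w => (fdep w : ℕ))
    (fun u v h => hfdep u v h) hm d 0 n φ hinj hstep
    (fun i hi => Nat.zero_le _)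
    (fun i hi => by simpa using (fdep (φ i).1).isLt)
  exact le_of_lt key
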